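/- There is an absolute constant c₀ > 0 with the following property. Let R > 0, δ ≥ 0 with δ·R ≤ c₀, and let φ : ℝ² → ℝ be twice continuously differentiable with φ(0,0) = 0, ∇φ(0,0) = 0, and ‖D²φ(y')‖ ≤ δ for all y' ∈ ℝ² with |y'| ≤ 2R. Define the flattening map ψ : ℝ³ → ℝ³ by ψ(x₁,x₂,x₃) = (x₁, x₂, x₃ − φ(x₁,x₂)). Then B⁺(R) ⊆ ψ( { x ∈ ℝ³ : |x| < 3R/2 and x₃ > φ(x₁,x₂) } ) ⊆ B⁺(2R), where B⁺(ρ) := { x ∈ ℝ³ : |x| < ρ and x₃ > 0 }. -/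

import Mathlib

open Set Metric

noncomputable section

/-- Points of `ℝ³` with the Euclidean norm. -/
abbrev E3 := EuclideanSpace ℝ (Fin 3)

/-- Points of `ℝ²` with the Euclidean norm. -/
abbrev E2 := EuclideanSpace ℝ (Fin 2)

/-- Projection onto the first two coordinates, `x ↦ x' = (x₁, x₂)`. -/
def proj2 (x : E3) : E2 := WithLp.toLp 2 (fun i : Fin 2 => x i.castSucc : Fin 2 → ℝ)

/-- The open upper half-ball `B⁺(ρ) = { x : |x| < ρ, x₃ > 0 }`. -/
def halfBall (ρ : ℝ) : Set E3 := {x | ‖x‖ < ρ ∧ x 2 > 0}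

/-- The flattening map `ψ(x₁,x₂,x₃) = (x₁, x₂, x₃ − φ(x₁,x₂))`. -/
def flatten (φ : E2 → ℝ) : E3 → E3 :=
  fun x => WithLp.toLp 2 (fun i : Fin 3 => if i = 2 then x 2 - φ (proj2 x) else x i : Fin 3 → ℝ)

lemma proj2_norm_le (x : E3) : ‖proj2 x‖ ≤ ‖x‖ := by
  rw [EuclideanSpace.norm_eq, EuclideanSpace.norm_eq]
  apply Real.sqrt_le_sqrt
  rw [Fin.sum_univ_castSucc (n := 2)]
  have h : (0:ℝ) ≤ ‖x (Fin.last 2)‖ ^ 2 := by positivity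
  have : ∀ i : Fin 2, ‖proj2 x i‖ ^ 2 = ‖x i.castSucc‖ ^ 2 := fun i => rfl
  simp only [this]
  linarith

lemma abs_coord_le (x : E3) (i : Fin 3) : |x i| ≤ ‖x‖ := by
  rw [EuclideanSpace.norm_eq,
    show |x i| = Real.sqrt (‖x i‖ ^ 2) by rw [Real.sqrt_sq_eq_abs]; simp]
  exact Real.sqrt_le_sqrt <|
    Finset.single_le_sum (f := fun j => ‖x j‖ ^ 2) (fun j _ => by positivity)
      (Finset.mem_univ i)

lemma flatten_eq (φ : E2 → ℝ) (x : E3) :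
    flatten φ x = x - φ (proj2 x) • EuclideanSpace.single (2 : Fin 3) (1 : ℝ) := by
  ext i
  simp only [flatten, PiLp.toLp_apply, PiLp.sub_apply, PiLp.smul_apply, EuclideanSpace.single_apply,
    smul_eq_mul]
  by_cases h : i = 2
  · subst h; simp
  · simp [h]

lemma proj2_add_single (x : E3) (c : ℝ) :
    proj2 (x + c • EuclideanSpace.single (2 : Fin 3) (1 : ℝ)) = proj2 x := by
  ext i
  have hi : (i.castSucc : Fin 3) ≠ 2 := ne_of_lt (Fin.castSucc_lt_last i)
  simp only [proj2, PiLp.toLp_apply, PiLp.add_apply, PiLp.smul_apply, EuclideanSpace.single_apply,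
    smul_eq_mul, if_neg hi, mul_zero, add_zero]

/-- **Nesting of half-balls under boundary flattening** (properties (4.20)–(4.21)).
There is an absolute constant `c₀ > 0` such that: if `R > 0`, `δ ≥ 0`, `δ·R ≤ c₀`, and
`φ : ℝ² → ℝ` is `C²` with `φ(0) = 0`, `∇φ(0) = 0` and `‖D²φ‖ ≤ δ` on `{|y'| ≤ 2R}`,
then `B⁺(R) ⊆ ψ({ |x| < 3R/2, x₃ > φ(x') }) ⊆ B⁺(2R)`. -/
theorem halfBall_nesting :
    ∃ c₀ : ℝ, 0 < c₀ ∧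
      ∀ R δ : ℝ, 0 < R → 0 ≤ δ → δ * R ≤ c₀ →
        ∀ φ : E2 → ℝ, ContDiff ℝ 2 φ → φ 0 = 0 → fderiv ℝ φ 0 = 0 →
          (∀ y' : E2, ‖y'‖ ≤ 2 * R → ‖iteratedFDeriv ℝ 2 φ y'‖ ≤ δ) →
          halfBall R ⊆ flatten φ '' {x : E3 | ‖x‖ < 3 * R / 2 ∧ x 2 > φ (proj2 x)} ∧
          flatten φ '' {x : E3 | ‖x‖ < 3 * R / 2 ∧ x 2 > φ (proj2 x)} ⊆ halfBall (2 * R) := by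
  refine ⟨1/16, by norm_num, fun R δ hR hδ hδR φ hφ hφ0 hDφ0 hD2 => ?_⟩
  -- the second derivative bound transfers to `fderiv (fderiv φ)`
  have hgdiff : Differentiable ℝ (fderiv ℝ φ) :=
    (hφ.fderiv_right (m := 1) (by norm_num)).differentiable (by norm_num)
  have hφdiff : Differentiable ℝ φ := hφ.differentiable (by norm_num)
  have hconv : Convex ℝ (closedBall (0 : E2) (2 * R)) := convex_closedBall _ _
  have hgrad : ∀ z ∈ closedBall (0 : E2) (2 * R), ‖fderiv ℝ φ z‖ ≤ 2 * δ * R := by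
    intro z hz
    have hzn : ‖z‖ ≤ 2 * R := by simpa [mem_closedBall, dist_eq_norm] using hz
    have hbound : ∀ w ∈ closedBall (0 : E2) (2 * R),
        ‖fderiv ℝ (fderiv ℝ φ) w‖ ≤ δ := by
      intro w hw
      have hwn : ‖w‖ ≤ 2 * R := by simpa [mem_closedBall, dist_eq_norm] using hw
      have : ‖fderiv ℝ (fderiv ℝ φ) w‖ = ‖iteratedFDeriv ℝ 2 φ w‖ := by
        rw [← norm_iteratedFDeriv_zero (𝕜 := ℝ) (f := fderiv ℝ (fderiv ℝ φ)) (x := w),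
          norm_iteratedFDeriv_fderiv, norm_iteratedFDeriv_fderiv]
      rw [this]
      exact hD2 w hwn
    have := hconv.norm_image_sub_le_of_norm_fderiv_le
      (fun w hw => hgdiff w) hbound
      (mem_closedBall_self (by positivity)) hz
    calc ‖fderiv ℝ φ z‖ = ‖fderiv ℝ φ z - fderiv ℝ φ 0‖ := by rw [hDφ0]; simp
      _ ≤ δ * ‖z - 0‖ := this
      _ ≤ 2 * δ * R := by
          rw [sub_zero]
          calc δ * ‖z‖ ≤ δ * (2 * R) := by
                exact mul_le_mul_of_nonneg_left hzn hδ
            _ = 2 * δ * R := by ring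
  -- hence `|φ y'| ≤ R/4` for `‖y'‖ ≤ 2R`
  have hφsmall : ∀ y' : E2, ‖y'‖ ≤ 2 * R → |φ y'| ≤ R / 4 := by
    intro y' hy'
    have hy'mem : y' ∈ closedBall (0 : E2) (2 * R) := by
      simpa [mem_closedBall, dist_eq_norm] using hy'
    have := hconv.norm_image_sub_le_of_norm_fderiv_le
      (fun w _ => hφdiff w) hgrad
      (mem_closedBall_self (by positivity)) hy'mem
    have h1 : |φ y'| ≤ 2 * δ * R * ‖y'‖ := by
      simpa [hφ0, Real.norm_eq_abs] using this
    have h2 : 2 * δ * R * ‖y'‖ ≤ 2 * δ * R * (2 * R) :=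
      mul_le_mul_of_nonneg_left hy' (by positivity)
    have h3 : 2 * δ * R * (2 * R) = 4 * (δ * R) * R := by ring
    have h4 : 4 * (δ * R) * R ≤ 4 * (1/16) * R := by
      have := mul_le_mul_of_nonneg_right hδR (le_of_lt hR)
      nlinarith
    linarith
  have e2norm : ‖EuclideanSpace.single (2 : Fin 3) (1 : ℝ)‖ = 1 := by
    simp [EuclideanSpace.norm_single]
  constructor
  · -- first inclusion
    rintro y ⟨hyn, hy2⟩
    set c := φ (proj2 y) with hc
    refine ⟨y + c • EuclideanSpace.single (2 : Fin 3) (1 : ℝ), ⟨?_, ?_⟩, ?_⟩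
    · have hproj : ‖proj2 y‖ ≤ 2 * R := le_trans (proj2_norm_le y) (by linarith)
      have hcb : |c| ≤ R / 4 := hφsmall _ hproj
      calc ‖y + c • EuclideanSpace.single (2 : Fin 3) (1 : ℝ)‖
          ≤ ‖y‖ + ‖c • EuclideanSpace.single (2 : Fin 3) (1 : ℝ)‖ := norm_add_le _ _
        _ = ‖y‖ + |c| := by rw [norm_smul, e2norm, Real.norm_eq_abs, mul_one]
        _ < 3 * R / 2 := by linarith
    · show (y + c • EuclideanSpace.single (2 : Fin 3) (1 : ℝ)) 2 > _
      rw [proj2_add_single]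
      have : (y + c • EuclideanSpace.single (2 : Fin 3) (1 : ℝ)) 2 = y 2 + c := by
        simp [PiLp.add_apply, PiLp.smul_apply, EuclideanSpace.single_apply]
      rw [this, ← hc]
      linarith
    · rw [flatten_eq, proj2_add_single, ← hc, add_sub_cancel_right]
  · -- second inclusion
    rintro z ⟨x, ⟨hxn, hx2⟩, rfl⟩
    have hproj : ‖proj2 x‖ ≤ 2 * R := le_trans (proj2_norm_le x) (by linarith)
    have hcb : |φ (proj2 x)| ≤ R / 4 := hφsmall _ hproj
    constructor
    · rw [flatten_eq]
      calc ‖x - φ (proj2 x) • EuclideanSpace.single (2 : Fin 3) (1 : ℝ)‖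
          ≤ ‖x‖ + ‖φ (proj2 x) • EuclideanSpace.single (2 : Fin 3) (1 : ℝ)‖ :=
            norm_sub_le _ _
        _ = ‖x‖ + |φ (proj2 x)| := by rw [norm_smul, e2norm, Real.norm_eq_abs, mul_one]
        _ < 2 * R := by linarith
    · show (flatten φ x) 2 > 0
      have : (flatten φ x) 2 = x 2 - φ (proj2 x) := by simp [flatten]
      rw [this]
      linarith
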